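/- arXiv:2101.08648 — 2 statements merged into one kernel-verified Lean document; each statement's English description precedes it below -/
import Mathlib

section
/- Let H be a finite simple graph, let r ≥ 1 be an integer, and suppose girth(H) > 4r. Fix a vertex u ∈ V(H), let B = {w ∈ V(H) : dist_H(u, w) ≤ r − 1}, and let x and y be two distinct vertices with dist_H(u, x) = dist_H(u, y) = r. Then every path from x to y in the induced subgraph of H on V(H) ∖ B has length greater than 2r; i.e., the distance between x and y in H with the vertex set B removed is greater than 2r. -/
open Classical

set_option linter.unusedSectionVars false

noncomputable section

namespace Formal

variable {V : Type*} [Fintype V] [DecidableEq V]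

/-- The real adjacency matrix of a finite simple graph. -/
def adjMat (G : SimpleGraph V) : Matrix V V ℝ :=
  letI := Classical.decRel G.Adj
  SimpleGraph.adjMatrix ℝ G

lemma adjMat_isHermitian (G : SimpleGraph V) : (adjMat G).IsHermitian := by
  letI := Classical.decRel G.Adj
  unfold adjMat
  rw [Matrix.IsHermitian, Matrix.conjTranspose_eq_transpose_of_trivial]
  exact SimpleGraph.isSymm_adjMatrix G

/-- `G` is `k`-regular: every vertex has exactly `k` neighbours. -/
def IsRegular (G : SimpleGraph V) (k : ℕ) : Prop :=
  ∀ v : V, (G.neighborSet v).ncard = k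

/-- The eigenvalues (with multiplicity) of the adjacency matrix, indexed by vertices. -/
def eigs (G : SimpleGraph V) : V → ℝ :=
  (adjMat_isHermitian G).eigenvalues

/-- The absolute values of the adjacency eigenvalues, sorted in increasing order. -/
def sortedAbsEigs (G : SimpleGraph V) : List ℝ :=
  (Finset.univ.val.map fun i => |eigs G i|).sort (· ≤ ·)

/-- `λ(G)`: the second largest absolute value of an eigenvalue (with multiplicity). -/
def secondLargestAbsEig (G : SimpleGraph V) : ℝ :=
  (sortedAbsEigs G).getD (Fintype.card V - 2) 0

/-- `λ₃(G)`: the third largest absolute value of an eigenvalue (with multiplicity). -/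
def thirdLargestAbsEig (G : SimpleGraph V) : ℝ :=
  (sortedAbsEigs G).getD (Fintype.card V - 3) 0

/-- `μ` has a `(k, ε)`-localized (ℓ²-normalized) eigenvector for `A(G)`. -/
def HasLocalizedEigenvector (G : SimpleGraph V) (μ : ℝ) (k : ℕ) (ε : ℝ) : Prop :=
  ∃ v : V → ℝ, (adjMat G).mulVec v = μ • v ∧ (∑ x, (v x) ^ 2) = 1 ∧
    ∃ S : Finset V, S.card = k ∧ ε ≤ ∑ x ∈ S, (v x) ^ 2

/-- There are `r` distinct eigenvalues of `A(G)`, each with a `(k, ε)`-localized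
eigenvector for some `k ≤ bound`. -/
def LocalizedSpectrum (G : SimpleGraph V) (r : ℕ) (ε bound : ℝ) : Prop :=
  ∃ Λ : Finset ℝ, Λ.card = r ∧
    ∀ μ ∈ Λ, ∃ k : ℕ, (k : ℝ) ≤ bound ∧ HasLocalizedEigenvector G μ k ε

/-- `girth(G) ≥ x` for a real number `x` (`girth = ⊤` counts as `≥ x`). -/
def girthGe {W : Type*} (G : SimpleGraph W) (x : ℝ) : Prop :=
  ∀ g : ℕ, G.girth = g → x ≤ g

/-- `girth(G) > x` for a real number `x` (`girth = ⊤` counts as `> x`). -/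
def girthGt {W : Type*} (G : SimpleGraph W) (x : ℝ) : Prop :=
  ∀ g : ℕ, G.girth = g → x < g

/-- The `j`-th prime, so `nthPrime 1 = 2`, `nthPrime 2 = 3`, ..., `nthPrime 10 = 29`. -/
def nthPrime (j : ℕ) : ℕ :=
  Nat.nth Nat.Prime (j - 1)

section Aux

open SimpleGraph

variable {W : Type*} {G : SimpleGraph W}

lemma walk_length_one_eq {a b : W} (p : G.Walk a b) (h : p.length = 1) :
    ∃ hab : G.Adj a b, p = Walk.cons hab Walk.nil := by
  cases p with
  | nil => simp at h
  | @cons _ c _ hadj p' =>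
    rw [Walk.length_cons] at h
    cases p' with
    | nil => exact ⟨hadj, rfl⟩
    | cons _ _ => simp [Walk.length_cons] at h

lemma edge_ends {a b : W} {p : G.Walk a b} (hp : p.IsPath) (he : s(a, b) ∈ p.edges) :
    p.length = 1 := by
  cases p with
  | nil => simp at he
  | @cons _ c _ hadj p' =>
    rw [Walk.edges_cons, List.mem_cons] at he
    rcases he with he | he
    · rw [Sym2.eq_iff] at he
      rcases he with ⟨-, hbc⟩ | ⟨hac, -⟩
      · subst hbc
        have hp' : p' = Walk.nil := Walk.isPath_iff_eq_nil.mp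
          ((Walk.cons_isPath_iff _ _).mp hp).1
        subst hp'
        simp
      · exact absurd hac hadj.ne
    · exact absurd (Walk.fst_mem_support_of_mem_edges p' he)
        ((Walk.cons_isPath_iff _ _).mp hp).2

lemma path_getVert_ne {a b : W} (p : G.Walk a b) :
    p.IsPath → ∀ i j, i < j → j ≤ p.length → p.getVert i ≠ p.getVert j := by
  induction p with
  | nil => intro _ i j hij hj; simp [Walk.length_nil] at hj; omega
  | cons hadj q ih =>
    intro hp i j hij hj
    rw [Walk.length_cons] at hj
    obtain ⟨j', rfl⟩ : ∃ j', j = j' + 1 := ⟨j - 1, by omega⟩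
    cases i with
    | zero =>
      intro hEq
      rw [Walk.getVert_zero, Walk.getVert_cons_succ] at hEq
      exact ((Walk.cons_isPath_iff _ _).mp hp).2
        (Walk.mem_support_iff_exists_getVert.mpr ⟨j', hEq.symm, by omega⟩)
    | succ i' =>
      rw [Walk.getVert_cons_succ, Walk.getVert_cons_succ]
      exact ih ((Walk.cons_isPath_iff _ _).mp hp).1 i' j' (by omega) (by omega)

lemma isPath_concat {a b c : W} {p : G.Walk a b} (hp : p.IsPath) (h : G.Adj b c)
    (hc : c ∉ p.support) : (p.concat h).IsPath := by
  rw [← Walk.isPath_reverse_iff, Walk.reverse_concat, Walk.cons_isPath_iff]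
  exact ⟨hp.reverse, by simpa [Walk.support_reverse] using hc⟩

lemma cycle_of_two_paths :
    ∀ (n : ℕ) {a b : W} (p q : G.Walk a b), p.IsPath → q.IsPath → p ≠ q →
      p.length + q.length ≤ n →
      ∃ (c : W) (w : G.Walk c c), w.IsCycle ∧ w.length ≤ n := by
  intro n
  induction n using Nat.strong_induction_on with
  | _ n IH =>
  intro a b p q hp hq hne hlen
  rcases eq_or_ne a b with rfl | hab
  · exact absurd ((Walk.isPath_iff_eq_nil.mp hp).trans
      (Walk.isPath_iff_eq_nil.mp hq).symm) hne
  by_cases hmeet : ∃ v, v ∈ p.support ∧ v ∈ q.support ∧ v ≠ a ∧ v ≠ b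
  · obtain ⟨v, hvp, hvq, hva, hvb⟩ := hmeet
    have hps := Walk.take_spec p hvp
    have hqs := Walk.take_spec q hvq
    have hl1 : (p.takeUntil v hvp).length + (p.dropUntil v hvp).length = p.length := by
      rw [← Walk.length_append, hps]
    have hl2 : (q.takeUntil v hvq).length + (q.dropUntil v hvq).length = q.length := by
      rw [← Walk.length_append, hqs]
    have h1p : 1 ≤ (p.takeUntil v hvp).length := by
      by_contra h0
      exact hva (Walk.eq_of_length_eq_zero (p := p.takeUntil v hvp) (by omega)).symm
    have h2p : 1 ≤ (p.dropUntil v hvp).length := by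
      by_contra h0
      exact hvb (Walk.eq_of_length_eq_zero (p := p.dropUntil v hvp) (by omega))
    have h1q : 1 ≤ (q.takeUntil v hvq).length := by
      by_contra h0
      exact hva (Walk.eq_of_length_eq_zero (p := q.takeUntil v hvq) (by omega)).symm
    have h2q : 1 ≤ (q.dropUntil v hvq).length := by
      by_contra h0
      exact hvb (Walk.eq_of_length_eq_zero (p := q.dropUntil v hvq) (by omega))
    by_cases h1 : p.takeUntil v hvp = q.takeUntil v hvq
    · have h2 : p.dropUntil v hvp ≠ q.dropUntil v hvq := by
        intro h2; apply hne; rw [← hps, ← hqs, h1, h2]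
      obtain ⟨c, w, hw, hwl⟩ := IH ((p.dropUntil v hvp).length + (q.dropUntil v hvq).length)
        (by omega) _ _ (hp.dropUntil hvp) (hq.dropUntil hvq) h2 le_rfl
      exact ⟨c, w, hw, by omega⟩
    · obtain ⟨c, w, hw, hwl⟩ := IH ((p.takeUntil v hvp).length + (q.takeUntil v hvq).length)
        (by omega) _ _ (hp.takeUntil hvp) (hq.takeUntil hvq) h1 le_rfl
      exact ⟨c, w, hw, by omega⟩
  · push_neg at hmeet
    have hdisj : ∀ e, e ∈ p.edges → e ∈ q.edges → False := by
      intro e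
      induction e using Sym2.ind with
      | _ c d =>
      intro hep heq
      have hadj : G.Adj c d := Walk.adj_of_mem_edges p hep
      have hcp := Walk.fst_mem_support_of_mem_edges p hep
      have hdp := Walk.snd_mem_support_of_mem_edges p hep
      have hcq := Walk.fst_mem_support_of_mem_edges q heq
      have hdq := Walk.snd_mem_support_of_mem_edges q heq
      have hcab : c = a ∨ c = b := by
        rcases eq_or_ne c a with h | h
        · exact Or.inl h
        · exact Or.inr (hmeet c hcp hcq h)
      have hdab : d = a ∨ d = b := by
        rcases eq_or_ne d a with h | h
        · exact Or.inl h
        · exact Or.inr (hmeet d hdp hdq h)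
      have heab : s(c, d) = s(a, b) := by
        rcases hcab with rfl | rfl <;> rcases hdab with rfl | rfl
        · exact absurd rfl hadj.ne
        · rfl
        · exact Sym2.eq_swap
        · exact absurd rfl hadj.ne
      rw [heab] at hep heq
      obtain ⟨h1, hpe⟩ := walk_length_one_eq p (edge_ends hp hep)
      obtain ⟨h2, hqe⟩ := walk_length_one_eq q (edge_ends hq heq)
      exact hne (hpe.trans hqe.symm)
    have hplen : 1 ≤ p.length := by
      by_contra h0
      exact hab (Walk.eq_of_length_eq_zero (p := p) (by omega))
    refine ⟨a, p.append q.reverse, ?_, ?_⟩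
    · rw [Walk.isCycle_def]
      refine ⟨?_, ?_, ?_⟩
      · rw [Walk.isTrail_def, Walk.edges_append, Walk.edges_reverse]
        refine List.Nodup.append (hp.isTrail.edges_nodup)
          (List.nodup_reverse.mpr hq.isTrail.edges_nodup) ?_
        intro e he he'
        exact hdisj e he (List.mem_reverse.mp he')
      · intro h0
        have h1 := congrArg Walk.length h0
        rw [Walk.length_append, Walk.length_reverse, Walk.length_nil] at h1
        omega
      · have hsupp : (p.append q.reverse).support = p.support ++ q.reverse.support.tail :=
          Walk.support_append _ _
        rw [hsupp, Walk.support_eq_cons p, List.cons_append, List.tail_cons]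
        have hnp := hp.support_nodup
        rw [Walk.support_eq_cons p, List.nodup_cons] at hnp
        have hnq := hq.reverse.support_nodup
        rw [Walk.support_eq_cons q.reverse, List.nodup_cons] at hnq
        refine List.Nodup.append hnp.2 hnq.2 ?_
        intro v hv1 hv2
        have hvp : v ∈ p.support := by
          rw [Walk.support_eq_cons p]; exact List.mem_cons_of_mem _ hv1
        have hvq : v ∈ q.support := by
          have h3 : v ∈ q.reverse.support := List.mem_of_mem_tail hv2
          rw [Walk.support_reverse] at h3
          exact List.mem_reverse.mp h3
        rcases eq_or_ne v a with rfl | hva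
        · exact hnp.1 hv1
        · rcases hmeet v hvp hvq hva with rfl
          exact hnq.1 hv2
    · rw [Walk.length_append, Walk.length_reverse]
      omega

end Aux

/-- in a graph of girth `> 4r`, two distinct vertices at distance `r`
from `u` are at distance `> 2r` once the ball of radius `r - 1` around `u` is
removed.  (A walk avoiding the ball `B` is exactly a walk in the induced subgraph
on the complement of `B`.) -/
theorem stmt_11 {V : Type*} [Fintype V] [DecidableEq V]
    (H : SimpleGraph V) (r : ℕ) (hr : 1 ≤ r)
    (hgirth : ((4 * r : ℕ) : ℕ∞) < H.girth)
    (u x y : V) (hxy : x ≠ y)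
    (hx : H.Reachable u x ∧ H.dist u x = r)
    (hy : H.Reachable u y ∧ H.dist u y = r)
    (p : H.Walk x y)
    (hp : ∀ w ∈ p.support, ¬ (H.Reachable u w ∧ H.dist u w ≤ r - 1)) :
    2 * r < p.length := by
  classical
  obtain ⟨hxr, hxd⟩ := hx
  obtain ⟨hyr, hyd⟩ := hy
  by_contra hlt
  push_neg at hlt
  -- uniqueness of paths of small total length
  have U : ∀ {s t : V} (P1 P2 : H.Walk s t), P1.IsPath → P2.IsPath →
      P1.length + P2.length ≤ 4 * r → P1 = P2 := by
    intro s t P1 P2 h1 h2 hl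
    by_contra hne
    obtain ⟨c, w, hw, hwl⟩ := cycle_of_two_paths (4 * r) P1 P2 h1 h2 hne hl
    have hg : H.egirth ≤ (w.length : ℕ∞) := SimpleGraph.le_egirth.mp le_rfl c w hw
    have hg2 : H.egirth ≤ ((4 * r : ℕ) : ℕ∞) := hg.trans (by exact_mod_cast Nat.cast_le.mpr hwl)
    have hne_top : H.egirth ≠ ⊤ := fun h => by
      rw [h, top_le_iff] at hg2
      exact ENat.coe_ne_top _ hg2
    have hcoe : (H.girth : ℕ∞) = H.egirth := ENat.coe_toNat hne_top
    rw [← hcoe] at hg2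
    exact absurd hgirth (not_lt.mpr hg2)
  -- no edge between two vertices equidistant from u (in the relevant range)
  have hADJ : ∀ a b : V, H.Reachable u a → H.Adj a b → H.dist u a = H.dist u b →
      2 * H.dist u a + 1 ≤ 4 * r → False := by
    intro a b hra hab hdeq hdb
    obtain ⟨S, hSp, hSl⟩ := hra.exists_path_of_dist
    have hbS : b ∉ S.support := by
      intro hb
      have h1 : H.dist u b ≤ (S.takeUntil b hb).length := SimpleGraph.dist_le _
      have h2 := SimpleGraph.Walk.length_takeUntil_le S hb
      have h3 : (S.takeUntil b hb).length + (S.dropUntil b hb).length = S.length := by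
        rw [← SimpleGraph.Walk.length_append, SimpleGraph.Walk.take_spec]
      exact hab.ne' (SimpleGraph.Walk.eq_of_length_eq_zero (p := S.dropUntil b hb) (by omega))
    have hT : (S.concat hab).IsPath := isPath_concat hSp hab hbS
    obtain ⟨Q, hQp, hQl⟩ := (hra.trans hab.reachable).exists_path_of_dist
    have hEq : S.concat hab = Q := U _ _ hT hQp (by rw [SimpleGraph.Walk.length_concat, hSl, hQl]; omega)
    have hlen := congrArg SimpleGraph.Walk.length hEq
    rw [SimpleGraph.Walk.length_concat, hSl, hQl] at hlen
    omega
  set P := p.bypass with hPdef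
  have hPp : P.IsPath := SimpleGraph.Walk.bypass_isPath p
  set m := P.length with hm
  have hm2r : m ≤ 2 * r := le_trans (SimpleGraph.Walk.length_bypass_le p) hlt
  set f : ℕ → ℕ := fun i => H.dist u (P.getVert i) with hf
  have hmemP : ∀ i ≤ m, P.getVert i ∈ P.support := fun i hi =>
    SimpleGraph.Walk.mem_support_iff_exists_getVert.mpr ⟨i, rfl, hi⟩
  have hreach : ∀ i ≤ m, H.Reachable u (P.getVert i) := fun i hi =>
    hxr.trans (SimpleGraph.Walk.reachable (P.takeUntil _ (hmemP i hi)))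
  have hge : ∀ i ≤ m, r ≤ f i := by
    intro i hi
    have h := hp _ (SimpleGraph.Walk.support_bypass_subset p (hmemP i hi))
    by_contra hcon
    push_neg at hcon
    exact h ⟨hreach i hi, by simp only [hf] at hcon; omega⟩
  have hf0 : f 0 = r := by simp only [hf, SimpleGraph.Walk.getVert_zero]; exact hxd
  have hfm : f m = r := by simp only [hf, hm, SimpleGraph.Walk.getVert_length]; exact hyd
  have hadjP : ∀ i < m, H.Adj (P.getVert i) (P.getVert (i + 1)) := fun i hi =>
    SimpleGraph.Walk.adj_getVert_succ P hi
  have hstep_ub : ∀ i < m, f (i + 1) ≤ f i + 1 := by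
    intro i hi
    obtain ⟨S, hSl⟩ := (hreach i hi.le).exists_walk_length_eq_dist
    have h := SimpleGraph.dist_le (S.concat (hadjP i hi))
    rw [SimpleGraph.Walk.length_concat, hSl] at h
    exact h
  have hstep_lb : ∀ i < m, f i ≤ f (i + 1) + 1 := by
    intro i hi
    obtain ⟨S, hSl⟩ := (hreach (i + 1) (by omega)).exists_walk_length_eq_dist
    have h := SimpleGraph.dist_le (S.concat (hadjP i hi).symm)
    rw [SimpleGraph.Walk.length_concat, hSl] at h
    exact h
  have hub1 : ∀ i ≤ m, f i ≤ r + i := by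
    intro i
    induction i with
    | zero => intro _; omega
    | succ i ih =>
      intro hi
      have h1 := hstep_ub i (by omega)
      have h2 := ih (by omega)
      omega
  have hub2 : ∀ k i, i + k = m → f i ≤ r + k := by
    intro k
    induction k with
    | zero =>
      intro i hi
      have h : f i = r := by rw [show i = m from by omega, hfm]
      omega
    | succ k ih =>
      intro i hi
      have h1 := hstep_lb i (by omega)
      have h2 := ih (i + 1) (by omega)
      omega
  have hneq : ∀ i < m, f i ≠ f (i + 1) := by
    intro i hi heq
    have b1 := hub1 i hi.le
    have b2 := hub2 (m - (i + 1)) (i + 1) (by omega)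
    exact hADJ (P.getVert i) (P.getVert (i + 1)) (hreach i hi.le) (hadjP i hi)
      (by simpa only [hf] using heq) (by simp only [hf] at b1 b2 heq ⊢; omega)
  have hstep : ∀ i < m, f (i + 1) = f i + 1 ∨ f i = f (i + 1) + 1 := by
    intro i hi
    have h1 := hstep_ub i hi
    have h2 := hstep_lb i hi
    have h3 := hneq i hi
    omega
  have hm1 : 1 ≤ m := by
    by_contra h0
    exact hxy (SimpleGraph.Walk.eq_of_length_eq_zero (p := P) (by omega))
  have hf1 : f 1 = r + 1 := by
    have h1 := hstep 0 (by omega)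
    rw [Nat.zero_add] at h1
    have h2 := hge 1 hm1
    omega
  have hm2 : 2 ≤ m := by
    by_contra h
    have h1 : m = 1 := by omega
    rw [h1] at hfm
    omega
  obtain ⟨i₀, hi₀mem, hmax⟩ := Finset.exists_max_image (Finset.range (m + 1)) f ⟨0, by simp⟩
  rw [Finset.mem_range] at hi₀mem
  have hmax' : ∀ j ≤ m, f j ≤ f i₀ := fun j hj => hmax j (Finset.mem_range.mpr (by omega))
  have hfi₀ : r + 1 ≤ f i₀ := hf1 ▸ hmax' 1 hm1
  have hi₀pos : 0 < i₀ := by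
    by_contra h
    have h1 : i₀ = 0 := by omega
    rw [h1, hf0] at hfi₀
    omega
  have hi₀lt : i₀ < m := by
    by_contra h
    have h1 : i₀ = m := by omega
    rw [h1, hfm] at hfi₀
    omega
  have hprev : f (i₀ - 1) + 1 = f i₀ := by
    have h := hstep (i₀ - 1) (by omega)
    rw [show i₀ - 1 + 1 = i₀ from by omega] at h
    have h2 := hmax' (i₀ - 1) (by omega)
    omega
  have hnext : f (i₀ + 1) + 1 = f i₀ := by
    have h := hstep i₀ hi₀lt
    have h2 := hmax' (i₀ + 1) (by omega)
    omega
  have habne : P.getVert (i₀ - 1) ≠ P.getVert (i₀ + 1) :=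
    path_getVert_ne P hPp (i₀ - 1) (i₀ + 1) (by omega) (by omega)
  have hac : H.Adj (P.getVert (i₀ - 1)) (P.getVert i₀) := by
    have h := hadjP (i₀ - 1) (by omega)
    rwa [show i₀ - 1 + 1 = i₀ from by omega] at h
  have hcb : H.Adj (P.getVert i₀) (P.getVert (i₀ + 1)) := hadjP i₀ hi₀lt
  have h2d : 2 * f i₀ ≤ 4 * r := by
    have h1 := hub1 i₀ hi₀lt.le
    have h2 := hub2 (m - i₀) i₀ (by omega)
    omega
  obtain ⟨Sa, hSap, hSal⟩ := (hreach (i₀ - 1) (by omega)).exists_path_of_dist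
  obtain ⟨Sb, hSbp, hSbl⟩ := (hreach (i₀ + 1) (by omega)).exists_path_of_dist
  have hda : Sa.length = f i₀ - 1 := by rw [hSal]; simp only [hf] at hprev ⊢; omega
  have hdb : Sb.length = f i₀ - 1 := by rw [hSbl]; simp only [hf] at hnext ⊢; omega
  have hdc : H.dist u (P.getVert i₀) = f i₀ := by simp only [hf]
  have hcSa : P.getVert i₀ ∉ Sa.support := by
    intro hc
    have h1 : H.dist u (P.getVert i₀) ≤ (Sa.takeUntil _ hc).length := SimpleGraph.dist_le _
    have h2 := SimpleGraph.Walk.length_takeUntil_le Sa hc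
    rw [hdc] at h1
    omega
  have hcSb : P.getVert i₀ ∉ Sb.support := by
    intro hc
    have h1 : H.dist u (P.getVert i₀) ≤ (Sb.takeUntil _ hc).length := SimpleGraph.dist_le _
    have h2 := SimpleGraph.Walk.length_takeUntil_le Sb hc
    rw [hdc] at h1
    omega
  have hTa : (Sa.concat hac).IsPath := isPath_concat hSap hac hcSa
  have hTb : (Sb.concat hcb.symm).IsPath := isPath_concat hSbp hcb.symm hcSb
  have hEq : Sa.concat hac = Sb.concat hcb.symm :=
    U _ _ hTa hTb (by rw [SimpleGraph.Walk.length_concat, SimpleGraph.Walk.length_concat, hda, hdb]; omega)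
  have hedge : s(P.getVert (i₀ - 1), P.getVert i₀) ∈ (Sb.concat hcb.symm).edges := by
    rw [← hEq, SimpleGraph.Walk.edges_concat, List.concat_eq_append, List.mem_append]
    right
    simp
  rw [SimpleGraph.Walk.edges_concat, List.concat_eq_append, List.mem_append] at hedge
  rcases hedge with he | he
  · have hcmem := SimpleGraph.Walk.snd_mem_support_of_mem_edges Sb he
    have h1 : H.dist u (P.getVert i₀) ≤ (Sb.takeUntil _ hcmem).length := SimpleGraph.dist_le _
    have h2 := SimpleGraph.Walk.length_takeUntil_le Sb hcmem
    rw [hdc] at h1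
    omega
  · rw [List.mem_singleton, Sym2.eq_iff] at he
    rcases he with ⟨h1, -⟩ | ⟨h1, -⟩
    · exact habne h1
    · have h2 := congrArg (H.dist u) h1
      rw [hdc] at h2
      have h3 : H.dist u (P.getVert (i₀ - 1)) = f i₀ - 1 := by
        simp only [hf] at hprev ⊢; omega
      rw [h3] at h2
      omega

end Formal
end
end

section
/- Let t, d, p be real numbers with 2 ≤ t ≤ d ≤ p and p − t ≤ (5/(2√6) − 1)·√t. Then 2√p + (p − d) ≤ (5/√6)·√d. -/
open Classical

set_option linter.unusedSectionVars false

noncomputable section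

namespace Formal

variable {V : Type*} [Fintype V] [DecidableEq V]

/-- the numerical inequality behind Proposition 2.4. -/
theorem stmt_13 (t d p : ℝ) (ht : 2 ≤ t) (htd : t ≤ d) (hdp : d ≤ p)
    (hgap : p - t ≤ (5 / (2 * Real.sqrt 6) - 1) * Real.sqrt t) :
    2 * Real.sqrt p + (p - d) ≤ (5 / Real.sqrt 6) * Real.sqrt d := by
  have hs6 : (0:ℝ) < Real.sqrt 6 := Real.sqrt_pos.mpr (by norm_num)
  have hs6sq : Real.sqrt 6 ^ 2 = 6 := Real.sq_sqrt (by norm_num)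
  set c : ℝ := 5 / (2 * Real.sqrt 6) - 1 with hc
  have hcge : 0 ≤ c := by
    have h25 : Real.sqrt 6 ≤ 5/2 := by nlinarith
    have h1 : 1 ≤ 5 / (2 * Real.sqrt 6) := by
      rw [le_div_iff₀ (by positivity)]; linarith
    simp only [hc]; linarith
  have h5 : 5 / Real.sqrt 6 = 2*c + 2 := by
    simp only [hc]; field_simp; ring
  clear_value c
  have ht0 : (0:ℝ) < t := by linarith
  have hd0 : (0:ℝ) < d := by linarith
  have hp0 : (0:ℝ) ≤ p := by linarith
  have hat : Real.sqrt t ^ 2 = t := Real.sq_sqrt ht0.le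
  have hbd : Real.sqrt d ^ 2 = d := Real.sq_sqrt hd0.le
  have hab : Real.sqrt t ≤ Real.sqrt d := Real.sqrt_le_sqrt htd
  have ha0 : 0 ≤ Real.sqrt t := Real.sqrt_nonneg t
  have hb0 : 0 ≤ Real.sqrt d := Real.sqrt_nonneg d
  have hb1 : 1 ≤ Real.sqrt d := by nlinarith
  have hbd2 : Real.sqrt d ≤ d := by nlinarith
  have hpd : p ≤ d + c * Real.sqrt d := by nlinarith
  have hq : Real.sqrt p ≤ (c + 2)/2 * Real.sqrt d := by
    have h1 : p ≤ ((c+2)/2 * Real.sqrt d)^2 := by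
      nlinarith [mul_le_mul_of_nonneg_left hbd2 hcge, mul_nonneg (mul_nonneg hcge hcge) hd0.le]
    calc Real.sqrt p ≤ Real.sqrt (((c+2)/2 * Real.sqrt d)^2) := Real.sqrt_le_sqrt h1
      _ = (c+2)/2 * Real.sqrt d := Real.sqrt_sq (by positivity)
  rw [h5]
  nlinarith [hq, hpd]

end Formal
end
end
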